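/- arXiv:2502.00995 — 5 statements merged into one kernel-verified Lean document; each statement's English description precedes it below -/
import Mathlib

section
/- Let C be a small C*-category. Then the space [C;ℂ] of all *-functors C → ℂ, equipped with the weak-* topology, is a compact Hausdorff topological space. -/
universe u v

/-- A small C*-category: objects `O`, hom-spaces `Hom A B` (the morphisms `C_{AB} = Hom(B,A)`),
each a complex Banach space, with bilinear submultiplicative composition and a conjugate-linear
involution satisfying the C*-identity and positivity of `x* ∘ x`. -/
class CStarCategory (O : Type u) (Hom : O → O → Type v)
    [∀ A B, NormedAddCommGroup (Hom A B)]
    [∀ A B, NormedSpace ℂ (Hom A B)] where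
  comp : ∀ {A B C : O}, Hom A B → Hom B C → Hom A C
  ident : ∀ A : O, Hom A A
  star : ∀ {A B : O}, Hom A B → Hom B A
  complete : ∀ A B : O, CompleteSpace (Hom A B)
  comp_assoc : ∀ {A B C D : O} (x : Hom A B) (y : Hom B C) (z : Hom C D),
    comp (comp x y) z = comp x (comp y z)
  ident_comp : ∀ {A B : O} (x : Hom A B), comp (ident A) x = x
  comp_ident : ∀ {A B : O} (x : Hom A B), comp x (ident B) = x
  add_comp : ∀ {A B C : O} (x x' : Hom A B) (y : Hom B C),
    comp (x + x') y = comp x y + comp x' y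
  comp_add : ∀ {A B C : O} (x : Hom A B) (y y' : Hom B C),
    comp x (y + y') = comp x y + comp x y'
  smul_comp : ∀ {A B C : O} (c : ℂ) (x : Hom A B) (y : Hom B C),
    comp (c • x) y = c • comp x y
  comp_smul : ∀ {A B C : O} (c : ℂ) (x : Hom A B) (y : Hom B C),
    comp x (c • y) = c • comp x y
  norm_comp_le : ∀ {A B C : O} (x : Hom A B) (y : Hom B C), ‖comp x y‖ ≤ ‖x‖ * ‖y‖
  star_star : ∀ {A B : O} (x : Hom A B), star (star x) = x
  star_add : ∀ {A B : O} (x y : Hom A B), star (x + y) = star x + star y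
  star_smul : ∀ {A B : O} (c : ℂ) (x : Hom A B),
    star (c • x) = (starRingEnd ℂ c) • star x
  star_comp : ∀ {A B C : O} (x : Hom A B) (y : Hom B C),
    star (comp x y) = comp (star y) (star x)
  star_ident : ∀ A : O, star (ident A) = ident A
  norm_star_comp_self : ∀ {A B : O} (x : Hom A B), ‖comp (star x) x‖ = ‖x‖ ^ 2
  star_comp_self_positive : ∀ {A B : O} (x : Hom A B),
    ∃ b : Hom B B, star b = b ∧ comp (star x) x = comp b b

/-- A `*`-functor from a small C*-category to `ℂ`: ℂ-linear on every hom-space,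
multiplicative on composition, unital on identities and compatible with the involutions. -/
structure StarFunctor (O : Type u) (Hom : O → O → Type v)
    [∀ A B, NormedAddCommGroup (Hom A B)] [∀ A B, NormedSpace ℂ (Hom A B)]
    [CStarCategory O Hom] where
  toFun : ∀ {A B : O}, Hom A B → ℂ
  map_add : ∀ {A B : O} (x y : Hom A B), toFun (x + y) = toFun x + toFun y
  map_smul : ∀ {A B : O} (c : ℂ) (x : Hom A B), toFun (c • x) = c * toFun x
  map_comp : ∀ {A B C : O} (x : Hom A B) (y : Hom B C),
    toFun (CStarCategory.comp x y) = toFun x * toFun y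
  map_ident : ∀ A : O, toFun (CStarCategory.ident A) = 1
  map_star : ∀ {A B : O} (x : Hom A B),
    toFun (CStarCategory.star x) = starRingEnd ℂ (toFun x)

/-- A C*-category is commutative if all diagonal hom-sets are commutative C*-algebras. -/
def CStarCategory.IsCommutative (O : Type u) (Hom : O → O → Type v)
    [∀ A B, NormedAddCommGroup (Hom A B)] [∀ A B, NormedSpace ℂ (Hom A B)]
    [CStarCategory O Hom] : Prop :=
  ∀ (A : O) (x y : Hom A A), CStarCategory.comp x y = CStarCategory.comp y x

variable {O : Type u} {Hom : O → O → Type v}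
    [∀ A B, NormedAddCommGroup (Hom A B)] [∀ A B, NormedSpace ℂ (Hom A B)]
    [CStarCategory O Hom]

/-- The weak-*-topology on the space `[C;ℂ]` of `*`-functors: the initial topology induced by
all evaluation maps `ev_x : ω ↦ ω(x)`. -/
noncomputable instance StarFunctor.instTopologicalSpace : TopologicalSpace (StarFunctor O Hom) :=
  TopologicalSpace.induced
    (fun ω => fun (A B : O) (x : Hom A B) => ω.toFun x) inferInstance

namespace CStarAux

open CStarCategory

lemma zero_comp {A B C : O} (y : Hom B C) : comp (0 : Hom A B) y = 0 := by
  have h := smul_comp (O := O) (Hom := Hom) (0 : ℂ) (0 : Hom A B) y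
  simpa using h

lemma comp_zero {A B C : O} (x : Hom A B) : comp x (0 : Hom B C) = 0 := by
  have h := comp_smul (O := O) (Hom := Hom) (0 : ℂ) x (0 : Hom B C)
  simpa using h

lemma sf_map_zero (ω : StarFunctor O Hom) {A B : O} : ω.toFun (0 : Hom A B) = 0 := by
  have h := ω.map_smul (0 : ℂ) (0 : Hom A B)
  simpa using h

/-- The diagonal hom-set as a normed ring. -/
@[reducible] noncomputable def diagNormedRing (B : O) : NormedRing (Hom B B) :=
  { (inferInstance : NormedAddCommGroup (Hom B B)) with
    mul := comp
    one := ident B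
    mul_assoc := fun a b c => comp_assoc a b c
    one_mul := ident_comp
    mul_one := comp_ident
    left_distrib := fun a b c => comp_add a b c
    right_distrib := fun a b c => add_comp a b c
    zero_mul := fun a => zero_comp a
    mul_zero := fun a => comp_zero a
    norm_mul_le := fun a b => norm_comp_le a b }

lemma sf_norm_le (ω : StarFunctor O Hom) {A B : O} (x : Hom A B) :
    ‖ω.toFun x‖ ≤ ‖x‖ := by
  letI : NormedRing (Hom B B) := diagNormedRing B
  letI : CompleteSpace (Hom B B) := complete B B
  letI : Algebra ℂ (Hom B B) := Algebra.ofModule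
    (fun c a b => smul_comp c a b) (fun c a b => comp_smul c a b)
  letI : NormedAlgebra ℂ (Hom B B) := { norm_smul_le := norm_smul_le }
  -- the character on the diagonal algebra
  let φ : Hom B B →ₐ[ℂ] ℂ :=
    { toFun := ω.toFun
      map_one' := ω.map_ident B
      map_mul' := fun a b => ω.map_comp a b
      map_zero' := sf_map_zero ω
      map_add' := fun a b => ω.map_add a b
      commutes' := by
        intro c
        show ω.toFun (c • ident B) = c
        rw [ω.map_smul, ω.map_ident, mul_one] }
  have hid1 : ‖(1 : Hom B B)‖ = 1 := by
    have h : ‖(1 : Hom B B)‖ = ‖(1 : Hom B B)‖ ^ 2 := by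
      have := norm_star_comp_self (O := O) (Hom := Hom) (ident B)
      rwa [star_ident, comp_ident] at this
    have hne : (1 : Hom B B) ≠ 0 := by
      intro h0
      have := ω.map_ident B
      rw [show ident B = (1 : Hom B B) from rfl, h0, sf_map_zero ω] at this
      exact one_ne_zero this.symm
    have hn : ‖(1 : Hom B B)‖ ≠ 0 := norm_ne_zero_iff.mpr hne
    have hmul : ‖(1 : Hom B B)‖ * ‖(1 : Hom B B)‖ = ‖(1 : Hom B B)‖ * 1 := by
      rw [mul_one, ← sq]; exact h.symm
    exact mul_left_cancel₀ hn hmul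
  have key : ∀ a : Hom B B, ‖ω.toFun a‖ ≤ ‖a‖ := by
    intro a
    have := AlgHom.norm_apply_le_self_mul_norm_one (𝕜 := ℂ) φ a
    rwa [hid1, mul_one] at this
  -- now the C*-trick
  have h1 : ‖ω.toFun x‖ ^ 2 = ‖ω.toFun (comp (star x) x)‖ := by
    rw [ω.map_comp, ω.map_star, norm_mul, RCLike.norm_conj, sq]
  have h2 : ‖ω.toFun (comp (star x) x)‖ ≤ ‖x‖ ^ 2 := by
    calc ‖ω.toFun (comp (star x) x)‖ ≤ ‖comp (star x) x‖ := key _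
    _ = ‖x‖ ^ 2 := norm_star_comp_self x
  have := h1.trans_le h2
  have hx := norm_nonneg x
  nlinarith [norm_nonneg (ω.toFun x)]

end CStarAux

namespace CStarAux2
open CStarCategory

variable (O Hom) in
/-- Evaluation embedding into the product space. -/
def e : StarFunctor O Hom → ∀ A B : O, Hom A B → ℂ := fun ω A B x => ω.toFun x

lemma e_inj : Function.Injective (e O Hom) := by
  intro ω ω' h
  have ht : @StarFunctor.toFun O Hom _ _ _ ω = @StarFunctor.toFun O Hom _ _ _ ω' := by
    funext A B x
    exact congrFun (congrFun (congrFun h A) B) x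
  cases ω; cases ω'
  cases ht
  rfl

lemma e_inducing : Topology.IsInducing (e O Hom) := ⟨rfl⟩

variable (O Hom) in
def S : Set (∀ A B : O, Hom A B → ℂ) :=
  {f | (∀ (A B : O) (x y : Hom A B), f A B (x + y) = f A B x + f A B y) ∧
       (∀ (A B : O) (c : ℂ) (x : Hom A B), f A B (c • x) = c * f A B x) ∧
       (∀ (A B C : O) (x : Hom A B) (y : Hom B C), f A C (comp x y) = f A B x * f B C y) ∧
       (∀ A : O, f A A (ident A) = 1) ∧
       (∀ (A B : O) (x : Hom A B), f B A (star x) = starRingEnd ℂ (f A B x))}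

lemma range_e : Set.range (e O Hom) = S O Hom := by
  ext f
  constructor
  · rintro ⟨ω, rfl⟩
    exact ⟨fun A B => ω.map_add, fun A B => ω.map_smul, fun A B C => ω.map_comp,
      ω.map_ident, fun A B => ω.map_star⟩
  · rintro ⟨h1, h2, h3, h4, h5⟩
    exact ⟨⟨fun {A B} x => f A B x, h1 _ _, h2 _ _, fun {A B C} => h3 A B C, h4, h5 _ _⟩, rfl⟩

lemma hev (A B : O) (x : Hom A B) :
    Continuous fun f : ∀ A B : O, Hom A B → ℂ => f A B x :=
  (continuous_apply x).comp ((continuous_apply B).comp (continuous_apply A))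

lemma closed_S : IsClosed (S O Hom) := by
  unfold S
  simp only [Set.setOf_and, Set.setOf_forall]
  refine IsClosed.inter ?_ (IsClosed.inter ?_ (IsClosed.inter ?_ (IsClosed.inter ?_ ?_)))
  · exact isClosed_iInter fun A => isClosed_iInter fun B => isClosed_iInter fun x =>
      isClosed_iInter fun y => isClosed_eq (hev A B _) ((hev A B x).add (hev A B y))
  · exact isClosed_iInter fun A => isClosed_iInter fun B => isClosed_iInter fun c =>
      isClosed_iInter fun x => isClosed_eq (hev A B _) (continuous_const.mul (hev A B x))
  · exact isClosed_iInter fun A => isClosed_iInter fun B => isClosed_iInter fun C =>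
      isClosed_iInter fun x => isClosed_iInter fun y =>
        isClosed_eq (hev A C _) ((hev A B x).mul (hev B C y))
  · exact isClosed_iInter fun A => isClosed_eq (hev A A _) continuous_const
  · exact isClosed_iInter fun A => isClosed_iInter fun B => isClosed_iInter fun x =>
      isClosed_eq (hev B A _) (continuous_star.comp (hev A B x))

variable (O Hom) in
def K : Set (∀ A B : O, Hom A B → ℂ) :=
  Set.univ.pi fun A => Set.univ.pi fun B => Set.univ.pi fun x => Metric.closedBall 0 ‖x‖

lemma compact_K : IsCompact (K O Hom) :=
  isCompact_univ_pi fun _ => isCompact_univ_pi fun _ => isCompact_univ_pi fun x =>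
    isCompact_closedBall 0 ‖x‖

lemma range_subset_K : Set.range (e O Hom) ⊆ K O Hom := by
  rintro f ⟨ω, rfl⟩
  intro A _
  intro B _
  intro x _
  simpa [e, Metric.mem_closedBall, dist_zero_right] using CStarAux.sf_norm_le ω x

end CStarAux2

open CStarAux2 in
/-- The space `[C;ℂ]` of all `*`-functors `C → ℂ` on a small C*-category,
with the weak-*-topology, is compact and Hausdorff. -/
theorem StarFunctor.compactSpace_and_t2Space :
    CompactSpace (StarFunctor O Hom) ∧ T2Space (StarFunctor O Hom) := by
  have hemb : Topology.IsEmbedding (e O Hom) := ⟨e_inducing, e_inj⟩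
  have hc : IsCompact (Set.range (e O Hom)) :=
    (compact_K (O := O) (Hom := Hom)).of_isClosed_subset
      ((range_e (O := O) (Hom := Hom)) ▸ closed_S (O := O) (Hom := Hom)) range_subset_K
  have hcs : IsCompact (Set.univ : Set (StarFunctor O Hom)) := by
    rw [(e_inducing (O := O) (Hom := Hom)).isCompact_iff, Set.image_univ]
    exact hc
  exact ⟨⟨hcs⟩, hemb.t2Space⟩
end

section
/- Let C be a small C*-category. The quotient space B^C of [C;ℂ] by the gauge-equivalence relation ∼, equipped with the quotient topology, is a compact Hausdorff space, and the quotient map [C;ℂ] → B^C is both an open map and a closed map. -/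
universe u v

variable {O : Type u} {Hom : O → O → Type v}
    [∀ A B, NormedAddCommGroup (Hom A B)] [∀ A B, NormedSpace ℂ (Hom A B)]
    [CStarCategory O Hom]

/-- Gauge equivalence of `*`-functors: `ω₁ ∼ ω₂` iff `ω₂ = α·ω₁` for some gauge cocycle `α`
on the object set (a family of unimodular complex numbers with `α(A,B)·α(B,C) = α(A,C)`). -/
def gaugeEquiv (ω₁ ω₂ : StarFunctor O Hom) : Prop :=
  ∃ α : O → O → ℂ, (∀ A B : O, ‖α A B‖ = 1) ∧
    (∀ A B C : O, α A B * α B C = α A C) ∧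
    ∀ (A B : O) (x : Hom A B), ω₂.toFun x = α A B * ω₁.toFun x


section Aux

open CStarCategory

private lemma CStar.zero_comp {A B C : O} (y : Hom B C) :
    comp (0 : Hom A B) y = 0 := by
  have h := add_comp (0 : Hom A B) 0 y
  rw [add_zero] at h
  exact (left_eq_add.mp h)

private lemma CStar.comp_zero {A B C : O} (x : Hom A B) :
    comp x (0 : Hom B C) = 0 := by
  have h := comp_add x (0 : Hom B C) 0
  rw [add_zero] at h
  exact (left_eq_add.mp h)

/-- The diagonal hom-set `Hom B B` is a ring. -/
noncomputable abbrev diagRing (B : O) : Ring (Hom B B) :=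
  { (inferInstance : AddCommGroup (Hom B B)) with
    mul := comp
    one := ident B
    mul_assoc := comp_assoc
    one_mul := ident_comp
    mul_one := comp_ident
    left_distrib := comp_add
    right_distrib := fun a b c => add_comp a b c
    zero_mul := fun y => CStar.zero_comp y
    mul_zero := fun x => CStar.comp_zero x }

/-- The diagonal hom-set `Hom B B` is a normed ring. -/
noncomputable abbrev diagNormedRing (B : O) : NormedRing (Hom B B) :=
  { diagRing B, (inferInstance : NormedAddCommGroup (Hom B B)) with
    norm_mul_le := fun a b => norm_comp_le a b }

/-- A `*`-functor is bounded by `1` on each diagonal hom-set. -/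
lemma StarFunctor.norm_toFun_le_diag (ω : StarFunctor O Hom) {B : O} (a : Hom B B) :
    ‖ω.toFun a‖ ≤ ‖a‖ := by
  letI : NormedRing (Hom B B) := diagNormedRing B
  haveI : CompleteSpace (Hom B B) := complete B B
  by_contra hlt
  push_neg at hlt
  set c := ω.toFun a with hc
  have hc0 : c ≠ 0 := by
    intro h
    rw [h, norm_zero] at hlt
    exact absurd hlt (not_lt.mpr (norm_nonneg a))
  have hcpos : (0 : ℝ) < ‖c‖ := norm_pos_iff.mpr hc0
  set u : Hom B B := c⁻¹ • a with hu
  have hun : ‖u‖ < 1 := by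
    rw [hu, norm_smul, norm_inv]
    calc ‖c‖⁻¹ * ‖a‖ < ‖c‖⁻¹ * ‖c‖ :=
          mul_lt_mul_of_pos_left hlt (inv_pos.mpr hcpos)
      _ = 1 := inv_mul_cancel₀ (ne_of_gt hcpos)
  let w : (Hom B B)ˣ := Units.oneSub u hun
  have hmulf : ∀ x y : Hom B B, ω.toFun (x * y) = ω.toFun x * ω.toFun y :=
    fun x y => ω.map_comp x y
  have honef : ω.toFun (1 : Hom B B) = 1 := ω.map_ident B
  have hsubf : ∀ x y : Hom B B, ω.toFun (x - y) = ω.toFun x - ω.toFun y := by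
    intro x y
    have h : x - y = x + (-1 : ℂ) • y := by rw [neg_one_smul, sub_eq_add_neg]
    rw [h, ω.map_add, ω.map_smul]; ring
  have key : ω.toFun ((w : Hom B B) * ((w⁻¹ : (Hom B B)ˣ) : Hom B B)) = 1 := by
    rw [w.mul_inv]; exact honef
  have hw : (w : Hom B B) = 1 - u := rfl
  have hu1 : ω.toFun u = 1 := by rw [hu, ω.map_smul, ← hc, inv_mul_cancel₀ hc0]
  rw [hmulf, hw, hsubf, honef, hu1, sub_self, zero_mul] at key
  exact zero_ne_one key

/-- A `*`-functor is bounded by `1` on every hom-set. -/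
lemma StarFunctor.norm_toFun_le (ω : StarFunctor O Hom) {A B : O} (x : Hom A B) :
    ‖ω.toFun x‖ ≤ ‖x‖ := by
  have h2 : ω.toFun (comp (star x) x) = (starRingEnd ℂ) (ω.toFun x) * ω.toFun x := by
    rw [ω.map_comp, ω.map_star]
  have hd := ω.norm_toFun_le_diag (comp (star x) x)
  rw [h2, norm_star_comp_self] at hd
  have h3 : ‖ω.toFun x‖ ^ 2 ≤ ‖x‖ ^ 2 := by
    calc ‖ω.toFun x‖ ^ 2 = ‖(starRingEnd ℂ) (ω.toFun x) * ω.toFun x‖ := by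
          rw [norm_mul, RCLike.norm_conj, sq]
      _ ≤ ‖x‖ ^ 2 := hd
  exact le_of_pow_le_pow_left₀ two_ne_zero (norm_nonneg x) h3

/-- The canonical map from `*`-functors into the product of hom-duals. -/
def starFunctorEmb : StarFunctor O Hom → ∀ A B : O, Hom A B → ℂ :=
  fun ω A B x => ω.toFun x

lemma inducing_starFunctorEmb : Topology.IsInducing (starFunctorEmb (O := O) (Hom := Hom)) :=
  ⟨rfl⟩

lemma injective_starFunctorEmb :
    Function.Injective (starFunctorEmb (O := O) (Hom := Hom)) := by
  intro f g h
  cases f; cases g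
  simp only [StarFunctor.mk.injEq]
  funext A B x
  exact congrFun (congrFun (congrFun h A) B) x

lemma StarFunctor.ext' {f g : StarFunctor O Hom}
    (h : ∀ (A B : O) (x : Hom A B), f.toFun x = g.toFun x) : f = g :=
  injective_starFunctorEmb (funext fun A => funext fun B => funext fun x => h A B x)

lemma continuous_evalPi (A B : O) (x : Hom A B) :
    Continuous fun f : ∀ A B : O, Hom A B → ℂ => f A B x := by
  have h1 : Continuous fun f : ∀ A B : O, Hom A B → ℂ => f A := continuous_apply A
  have h2 : Continuous fun g : ∀ B : O, Hom A B → ℂ => g B := continuous_apply B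
  have h3 : Continuous fun e : Hom A B → ℂ => e x := continuous_apply x
  exact h3.comp (h2.comp h1)

lemma continuous_evalSF (A B : O) (x : Hom A B) :
    Continuous fun ω : StarFunctor O Hom => ω.toFun x := by
  have h : Continuous (starFunctorEmb (O := O) (Hom := Hom)) := continuous_induced_dom
  exact (continuous_evalPi A B x).comp h

lemma isClosed_range_starFunctorEmb :
    IsClosed (Set.range (starFunctorEmb (O := O) (Hom := Hom))) := by
  have hrange : Set.range (starFunctorEmb (O := O) (Hom := Hom)) =
      {f | (∀ (A B : O) (x y : Hom A B), f A B (x + y) = f A B x + f A B y) ∧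
        (∀ (A B : O) (c : ℂ) (x : Hom A B), f A B (c • x) = c * f A B x) ∧
        (∀ (A B C : O) (x : Hom A B) (y : Hom B C),
          f A C (comp x y) = f A B x * f B C y) ∧
        (∀ A : O, f A A (ident A) = 1) ∧
        (∀ (A B : O) (x : Hom A B), f B A (star x) = (starRingEnd ℂ) (f A B x))} := by
    ext f
    constructor
    · rintro ⟨ω, rfl⟩
      exact ⟨fun A B x y => ω.map_add x y, fun A B c x => ω.map_smul c x,
        fun A B C x y => ω.map_comp x y, ω.map_ident, fun A B x => ω.map_star x⟩
    · rintro ⟨h1, h2, h3, h4, h5⟩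
      exact ⟨⟨fun {A B} x => f A B x, fun {A B} x y => h1 A B x y,
        fun {A B} c x => h2 A B c x, fun {A B C} x y => h3 A B C x y, h4,
        fun {A B} x => h5 A B x⟩, rfl⟩
  rw [hrange]
  have e1 : IsClosed {f : ∀ A B : O, Hom A B → ℂ |
      ∀ (A B : O) (x y : Hom A B), f A B (x + y) = f A B x + f A B y} := by
    have : {f : ∀ A B : O, Hom A B → ℂ |
        ∀ (A B : O) (x y : Hom A B), f A B (x + y) = f A B x + f A B y} =
        ⋂ A, ⋂ B, ⋂ x, ⋂ y, {f : ∀ A B : O, Hom A B → ℂ |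
          f A B (x + y) = f A B x + f A B y} := by
      ext f; simp
    rw [this]
    exact isClosed_iInter fun A => isClosed_iInter fun B => isClosed_iInter fun x =>
      isClosed_iInter fun y =>
        isClosed_eq (continuous_evalPi A B (x + y))
          ((continuous_evalPi A B x).add (continuous_evalPi A B y))
  have e2 : IsClosed {f : ∀ A B : O, Hom A B → ℂ |
      ∀ (A B : O) (c : ℂ) (x : Hom A B), f A B (c • x) = c * f A B x} := by
    have : {f : ∀ A B : O, Hom A B → ℂ |
        ∀ (A B : O) (c : ℂ) (x : Hom A B), f A B (c • x) = c * f A B x} =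
        ⋂ A, ⋂ B, ⋂ c, ⋂ x, {f : ∀ A B : O, Hom A B → ℂ |
          f A B (c • x) = c * f A B x} := by
      ext f; simp
    rw [this]
    exact isClosed_iInter fun A => isClosed_iInter fun B => isClosed_iInter fun c =>
      isClosed_iInter fun x =>
        isClosed_eq (continuous_evalPi A B (c • x))
          (continuous_const.mul (continuous_evalPi A B x))
  have e3 : IsClosed {f : ∀ A B : O, Hom A B → ℂ |
      ∀ (A B C : O) (x : Hom A B) (y : Hom B C), f A C (comp x y) = f A B x * f B C y} := by
    have : {f : ∀ A B : O, Hom A B → ℂ |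
        ∀ (A B C : O) (x : Hom A B) (y : Hom B C),
          f A C (comp x y) = f A B x * f B C y} =
        ⋂ A, ⋂ B, ⋂ C, ⋂ x, ⋂ y, {f : ∀ A B : O, Hom A B → ℂ |
          f A C (comp x y) = f A B x * f B C y} := by
      ext f; simp
    rw [this]
    exact isClosed_iInter fun A => isClosed_iInter fun B => isClosed_iInter fun C =>
      isClosed_iInter fun x => isClosed_iInter fun y =>
        isClosed_eq (continuous_evalPi A C (comp x y))
          ((continuous_evalPi A B x).mul (continuous_evalPi B C y))
  have e4 : IsClosed {f : ∀ A B : O, Hom A B → ℂ | ∀ A : O, f A A (ident A) = 1} := by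
    have : {f : ∀ A B : O, Hom A B → ℂ | ∀ A : O, f A A (ident A) = 1} =
        ⋂ A, {f : ∀ A B : O, Hom A B → ℂ | f A A (ident A) = 1} := by
      ext f; simp
    rw [this]
    exact isClosed_iInter fun A =>
      isClosed_eq (continuous_evalPi A A (ident A)) continuous_const
  have e5 : IsClosed {f : ∀ A B : O, Hom A B → ℂ |
      ∀ (A B : O) (x : Hom A B), f B A (star x) = (starRingEnd ℂ) (f A B x)} := by
    have : {f : ∀ A B : O, Hom A B → ℂ |
        ∀ (A B : O) (x : Hom A B), f B A (star x) = (starRingEnd ℂ) (f A B x)} =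
        ⋂ A, ⋂ B, ⋂ x, {f : ∀ A B : O, Hom A B → ℂ |
          f B A (star x) = (starRingEnd ℂ) (f A B x)} := by
      ext f; simp
    rw [this]
    exact isClosed_iInter fun A => isClosed_iInter fun B => isClosed_iInter fun x =>
      isClosed_eq (continuous_evalPi B A (star x))
        (Complex.continuous_conj.comp (continuous_evalPi A B x))
  exact e1.inter (e2.inter (e3.inter (e4.inter e5)))

lemma compactSpace_starFunctor : CompactSpace (StarFunctor O Hom) := by
  set Φ := starFunctorEmb (O := O) (Hom := Hom)
  have hK : IsCompact (Set.pi Set.univ fun A : O => Set.pi Set.univ fun B : O =>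
      Set.pi Set.univ fun x : Hom A B => Metric.closedBall (0 : ℂ) ‖x‖) :=
    isCompact_univ_pi fun A => isCompact_univ_pi fun B => isCompact_univ_pi fun x =>
      isCompact_closedBall 0 ‖x‖
  have hsub : Set.range Φ ⊆ Set.pi Set.univ fun A : O => Set.pi Set.univ fun B : O =>
      Set.pi Set.univ fun x : Hom A B => Metric.closedBall (0 : ℂ) ‖x‖ := by
    rintro _ ⟨ω, rfl⟩
    intro A _
    intro B _
    intro x _
    rw [Metric.mem_closedBall, dist_zero_right]
    exact ω.norm_toFun_le x
  have hrange : IsCompact (Set.range Φ) :=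
    hK.of_isClosed_subset isClosed_range_starFunctorEmb hsub
  have hemb : Topology.IsEmbedding Φ :=
    ⟨inducing_starFunctorEmb, injective_starFunctorEmb⟩
  refine ⟨?_⟩
  rw [hemb.isInducing.isCompact_iff, Set.image_univ]
  exact hrange

lemma conj_mul_self_of_abs_one {z : ℂ} (h : ‖z‖ = 1) :
    (starRingEnd ℂ) z * z = 1 := by
  rw [mul_comm, Complex.mul_conj, Complex.normSq_eq_norm_sq, h]
  norm_num

lemma cocycle_ne_zero {α : O → O → ℂ} (h1 : ∀ A B : O, ‖α A B‖ = 1)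
    (A B : O) : α A B ≠ 0 := by
  intro h0
  have := h1 A B
  rw [h0] at this
  simp at this

lemma cocycle_diag {α : O → O → ℂ} (h1 : ∀ A B : O, ‖α A B‖ = 1)
    (hc : ∀ A B C : O, α A B * α B C = α A C) (A : O) : α A A = 1 := by
  have h := hc A A A
  exact mul_right_cancel₀ (cocycle_ne_zero h1 A A) (by rw [h, one_mul])

lemma cocycle_conj {α : O → O → ℂ} (h1 : ∀ A B : O, ‖α A B‖ = 1)
    (hc : ∀ A B C : O, α A B * α B C = α A C) (A B : O) :
    α B A = (starRingEnd ℂ) (α A B) := by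
  apply mul_left_cancel₀ (cocycle_ne_zero h1 A B)
  rw [hc A B A, cocycle_diag h1 hc A, mul_comm, conj_mul_self_of_abs_one (h1 A B)]

lemma gaugeEquiv_equivalence : Equivalence (gaugeEquiv (O := O) (Hom := Hom)) := by
  constructor
  · intro ω
    exact ⟨fun _ _ => 1, by simp, by simp, by simp⟩
  · rintro ω₁ ω₂ ⟨α, h1, hc, hval⟩
    refine ⟨fun A B => (starRingEnd ℂ) (α A B), by simp [h1], ?_, ?_⟩
    · intro A B C
      rw [← map_mul, hc]
    · intro A B x
      rw [hval A B x, ← mul_assoc, conj_mul_self_of_abs_one (h1 A B), one_mul]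
  · rintro ω₁ ω₂ ω₃ ⟨α, h1, hc, hval⟩ ⟨β, g1, gc, gval⟩
    refine ⟨fun A B => β A B * α A B, ?_, ?_, ?_⟩
    · intro A B; rw [norm_mul, h1, g1, mul_one]
    · intro A B C
      have := hc A B C
      have := gc A B C
      calc β A B * α A B * (β B C * α B C) = (β A B * β B C) * (α A B * α B C) := by ring
        _ = β A C * α A C := by rw [hc, gc]
    · intro A B x
      rw [gval A B x, hval A B x]; ring

/-- The action of a gauge cocycle on `*`-functors. -/
def gaugeAct (α : O → O → ℂ) (h1 : ∀ A B : O, ‖α A B‖ = 1)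
    (hc : ∀ A B C : O, α A B * α B C = α A C) (ω : StarFunctor O Hom) :
    StarFunctor O Hom where
  toFun {A B} x := α A B * ω.toFun x
  map_add {A B} x y := by
    show α A B * ω.toFun (x + y) = α A B * ω.toFun x + α A B * ω.toFun y
    rw [ω.map_add]; ring
  map_smul {A B} c x := by
    show α A B * ω.toFun (c • x) = c * (α A B * ω.toFun x)
    rw [ω.map_smul]; ring
  map_comp {A B C} x y := by
    show α A C * ω.toFun (comp x y) = (α A B * ω.toFun x) * (α B C * ω.toFun y)
    rw [ω.map_comp, ← hc A B C]; ring
  map_ident A := by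
    show α A A * ω.toFun (ident A) = 1
    rw [ω.map_ident, cocycle_diag h1 hc A, one_mul]
  map_star {A B} x := by
    show α B A * ω.toFun (star x) = (starRingEnd ℂ) (α A B * ω.toFun x)
    rw [ω.map_star, cocycle_conj h1 hc A B, map_mul]

lemma continuous_gaugeAct (α : O → O → ℂ) (h1 : ∀ A B : O, ‖α A B‖ = 1)
    (hc : ∀ A B C : O, α A B * α B C = α A C) :
    Continuous (gaugeAct (O := O) (Hom := Hom) α h1 hc) := by
  apply continuous_induced_rng.mpr
  refine continuous_pi fun A => continuous_pi fun B => continuous_pi fun x => ?_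
  exact continuous_const.mul (continuous_evalSF A B x)

lemma quotMk_eq_iff (a b : StarFunctor O Hom) :
    Quot.mk (gaugeEquiv (O := O) (Hom := Hom)) a =
      Quot.mk (gaugeEquiv (O := O) (Hom := Hom)) b ↔ gaugeEquiv a b := by
  rw [Quot.eq]
  exact gaugeEquiv_equivalence.eqvGen_iff

lemma isOpenMap_quotMk :
    IsOpenMap (Quot.mk (gaugeEquiv (O := O) (Hom := Hom))) := by
  intro U hU
  rw [isOpen_coinduced]
  have hset : Quot.mk (gaugeEquiv (O := O) (Hom := Hom)) ⁻¹'
      (Quot.mk (gaugeEquiv (O := O) (Hom := Hom)) '' U) =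
      ⋃ α : {α : O → O → ℂ // (∀ A B : O, ‖α A B‖ = 1) ∧
          ∀ A B C : O, α A B * α B C = α A C},
        gaugeAct α.1 α.2.1 α.2.2 ⁻¹' U := by
    ext ω₂
    simp only [Set.mem_preimage, Set.mem_image, Set.mem_iUnion]
    constructor
    · rintro ⟨ω₁, hω₁U, heq⟩
      obtain ⟨α, h1, hc, hval⟩ := (quotMk_eq_iff ω₁ ω₂).mp heq
      have h1' : ∀ A B : O, ‖(starRingEnd ℂ) (α A B)‖ = 1 := by
        simp [h1]
      have hc' : ∀ A B C : O, (starRingEnd ℂ) (α A B) * (starRingEnd ℂ) (α B C) =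
          (starRingEnd ℂ) (α A C) := by
        intro A B C; rw [← map_mul, hc]
      refine ⟨⟨fun A B => (starRingEnd ℂ) (α A B), h1', hc'⟩, ?_⟩
      have hact : gaugeAct (fun A B => (starRingEnd ℂ) (α A B)) h1' hc' ω₂ = ω₁ := by
        apply StarFunctor.ext'
        intro A B x
        show (starRingEnd ℂ) (α A B) * ω₂.toFun x = ω₁.toFun x
        rw [hval A B x, ← mul_assoc, conj_mul_self_of_abs_one (h1 A B), one_mul]
      show gaugeAct (fun A B => (starRingEnd ℂ) (α A B)) h1' hc' ω₂ ∈ U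
      rw [hact]
      exact hω₁U
    · rintro ⟨α, hmem⟩
      refine ⟨gaugeAct α.1 α.2.1 α.2.2 ω₂, hmem, ?_⟩
      apply (quotMk_eq_iff _ _).mpr
      refine ⟨fun A B => (starRingEnd ℂ) (α.1 A B), by simp [α.2.1], ?_, ?_⟩
      · intro A B C; rw [← map_mul, α.2.2]
      · intro A B x
        show ω₂.toFun x = (starRingEnd ℂ) (α.1 A B) * (α.1 A B * ω₂.toFun x)
        rw [← mul_assoc, conj_mul_self_of_abs_one (α.2.1 A B), one_mul]
  rw [hset]
  exact isOpen_iUnion fun α => hU.preimage (continuous_gaugeAct α.1 α.2.1 α.2.2)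

lemma isCompact_cocycleSet :
    IsCompact {α : O → O → ℂ | (∀ A B : O, ‖α A B‖ = 1) ∧
      ∀ A B C : O, α A B * α B C = α A C} := by
  have hK : IsCompact (Set.pi Set.univ fun _ : O => Set.pi Set.univ fun _ : O =>
      Metric.sphere (0 : ℂ) 1) :=
    isCompact_univ_pi fun _ => isCompact_univ_pi fun _ => isCompact_sphere 0 1
  apply hK.of_isClosed_subset
  · have h1c : IsClosed {α : O → O → ℂ | ∀ A B : O, ‖α A B‖ = 1} := by
      have : {α : O → O → ℂ | ∀ A B : O, ‖α A B‖ = 1} =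
          ⋂ A, ⋂ B, {α : O → O → ℂ | ‖α A B‖ = 1} := by ext α; simp
      rw [this]
      exact isClosed_iInter fun A => isClosed_iInter fun B =>
        isClosed_eq (continuous_norm.comp
          ((continuous_apply B).comp (continuous_apply A))) continuous_const
    have h2c : IsClosed {α : O → O → ℂ | ∀ A B C : O, α A B * α B C = α A C} := by
      have : {α : O → O → ℂ | ∀ A B C : O, α A B * α B C = α A C} =
          ⋂ A, ⋂ B, ⋂ C, {α : O → O → ℂ | α A B * α B C = α A C} := by ext α; simp
      rw [this]
      exact isClosed_iInter fun A => isClosed_iInter fun B => isClosed_iInter fun C =>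
        isClosed_eq (((continuous_apply B).comp (continuous_apply A)).fun_mul
          ((continuous_apply C).comp (continuous_apply B)))
          ((continuous_apply C).comp (continuous_apply A))
    exact h1c.inter h2c
  · rintro α ⟨h1, _⟩
    intro A _
    intro B _
    rw [mem_sphere_iff_norm, sub_zero]
    exact h1 A B

lemma isClosed_gaugeEquiv_rel :
    IsClosed {p : StarFunctor O Hom × StarFunctor O Hom | gaugeEquiv p.1 p.2} := by
  haveI : CompactSpace {α : O → O → ℂ // (∀ A B : O, ‖α A B‖ = 1) ∧
      ∀ A B C : O, α A B * α B C = α A C} :=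
    isCompact_iff_compactSpace.mp isCompact_cocycleSet
  set T := {α : O → O → ℂ // (∀ A B : O, ‖α A B‖ = 1) ∧
      ∀ A B C : O, α A B * α B C = α A C}
  set S : Set (T × (StarFunctor O Hom × StarFunctor O Hom)) :=
    {q | ∀ (A B : O) (x : Hom A B), q.2.2.toFun x = q.1.1 A B * q.2.1.toFun x} with hS
  have hSclosed : IsClosed S := by
    have : S = ⋂ (A : O), ⋂ (B : O), ⋂ (x : Hom A B), {q : T × (StarFunctor O Hom × StarFunctor O Hom) |
        q.2.2.toFun x = q.1.1 A B * q.2.1.toFun x} := by ext q; simp [hS]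
    rw [this]
    refine isClosed_iInter fun A => isClosed_iInter fun B => isClosed_iInter fun x =>
      isClosed_eq ?_ ?_
    · exact (continuous_evalSF A B x).comp (continuous_snd.comp continuous_snd)
    · exact (((continuous_apply B).comp ((continuous_apply A).comp
        (continuous_subtype_val.comp continuous_fst)))).fun_mul
        ((continuous_evalSF A B x).comp (continuous_fst.comp continuous_snd))
  have himg : {p : StarFunctor O Hom × StarFunctor O Hom | gaugeEquiv p.1 p.2} =
      Prod.snd '' S := by
    ext p
    constructor
    · rintro ⟨α, h1, hc, hval⟩
      exact ⟨⟨⟨α, h1, hc⟩, p⟩, fun A B x => hval A B x, rfl⟩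
    · rintro ⟨⟨α, p'⟩, hq, rfl⟩
      exact ⟨α.1, α.2.1, α.2.2, fun A B x => hq A B x⟩
  rw [himg]
  exact isClosedMap_snd_of_compactSpace S hSclosed

lemma t2Space_gaugeQuotient :
    T2Space (Quot (gaugeEquiv (O := O) (Hom := Hom))) := by
  set q := Quot.mk (gaugeEquiv (O := O) (Hom := Hom)) with hq
  have hqq : Topology.IsQuotientMap (Prod.map q q) :=
    ((isOpenMap_quotMk).prodMap (isOpenMap_quotMk)).isQuotientMap
      ((continuous_quot_mk).prodMap (continuous_quot_mk))
      ((Quot.mk_surjective).prodMap (Quot.mk_surjective))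
  rw [t2_iff_isClosed_diagonal, ← hqq.isClosed_preimage]
  have : Prod.map q q ⁻¹' Set.diagonal (Quot (gaugeEquiv (O := O) (Hom := Hom))) =
      {p : StarFunctor O Hom × StarFunctor O Hom | gaugeEquiv p.1 p.2} := by
    ext p
    simp only [Set.mem_preimage, Set.mem_diagonal_iff, Prod.map_fst, Prod.map_snd,
      Set.mem_setOf_eq]
    exact quotMk_eq_iff p.1 p.2
  rw [this]
  exact isClosed_gaugeEquiv_rel

end Aux

/-- The quotient space `B^C` of `[C;ℂ]` by gauge equivalence, with the
quotient topology, is compact Hausdorff, and the quotient map is both open and closed. -/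
theorem gaugeQuotient_compact_t2_open_closed :
    CompactSpace (Quot (gaugeEquiv (O := O) (Hom := Hom))) ∧
    T2Space (Quot (gaugeEquiv (O := O) (Hom := Hom))) ∧
    IsOpenMap (Quot.mk (gaugeEquiv (O := O) (Hom := Hom))) ∧
    IsClosedMap (Quot.mk (gaugeEquiv (O := O) (Hom := Hom))) := by
  haveI := compactSpace_starFunctor (O := O) (Hom := Hom)
  haveI := t2Space_gaugeQuotient (O := O) (Hom := Hom)
  refine ⟨inferInstance, inferInstance, isOpenMap_quotMk, ?_⟩
  exact (continuous_quot_mk).isClosedMap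
end

section
/- Let C be a small commutative C*-category, A, B objects of C, ω, ρ ∈ [C;ℂ], and u a unimodular complex number such that ρ(x) = u·ω(x) for all x ∈ C_{AB} and ω does not vanish identically on C_{AB}. Then ω(a) = ρ(a) for all a ∈ C_{AA} and ω(b) = ρ(b) for all b ∈ C_{BB}. -/
universe u v

variable {O : Type u} {Hom : O → O → Type v}
    [∀ A B, NormedAddCommGroup (Hom A B)] [∀ A B, NormedSpace ℂ (Hom A B)]
    [CStarCategory O Hom]

/-- If two `*`-functors `ω, ρ` on a small commutative C*-category satisfy
`ρ = u·ω` on `C_{AB}` for some unimodular `u`, and `ω` does not vanish identically on `C_{AB}`,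
then `ω` and `ρ` agree on `C_{AA}` and on `C_{BB}`. -/
theorem StarFunctor.eq_on_diagonals_of_phase_related
    (hcomm : CStarCategory.IsCommutative O Hom) (A B : O)
    (ω ρ : StarFunctor O Hom) (u : ℂ) (hu : ‖u‖ = 1)
    (h : ∀ x : Hom A B, ρ.toFun x = u * ω.toFun x)
    (hnz : ∃ x : Hom A B, ω.toFun x ≠ 0) :
    (∀ a : Hom A A, ω.toFun a = ρ.toFun a) ∧ (∀ b : Hom B B, ω.toFun b = ρ.toFun b) := by
  obtain ⟨x, hx⟩ := hnz
  have hu0 : u ≠ 0 := by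
    intro h0; rw [h0] at hu; simp at hu
  constructor
  · intro a
    have h1 : ρ.toFun a * ρ.toFun x = u * (ω.toFun a * ω.toFun x) := by
      rw [← ρ.map_comp, h (CStarCategory.comp a x), ω.map_comp]
    rw [h x] at h1
    have := mul_left_cancel₀ hu0 (by linear_combination h1 :
      u * (ρ.toFun a * ω.toFun x) = u * (ω.toFun a * ω.toFun x))
    exact (mul_right_cancel₀ hx this).symm
  · intro b
    have h1 : ρ.toFun x * ρ.toFun b = u * (ω.toFun x * ω.toFun b) := by
      rw [← ρ.map_comp, h (CStarCategory.comp x b), ω.map_comp]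
    rw [h x] at h1
    have := mul_left_cancel₀ hu0 (by linear_combination h1 :
      u * (ω.toFun x * ρ.toFun b) = u * (ω.toFun x * ω.toFun b))
    exact (mul_left_cancel₀ hx this).symm
end

section
/- Let C be a small commutative C*-category, A, B objects of C, and ω, ρ ∈ [C;ℂ] with ω(a) = ρ(a) for all a ∈ C_{AA}. Then |ω(x)| = |ρ(x)| for every x ∈ C_{AB}; in particular the kernels of ω and ρ on C_{AB} coincide, and if ω does not vanish identically on C_{AB} then there exists a unimodular complex number u with ρ(x) = u·ω(x) for all x ∈ C_{AB}. -/
universe u v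

variable {O : Type u} {Hom : O → O → Type v}
    [∀ A B, NormedAddCommGroup (Hom A B)] [∀ A B, NormedSpace ℂ (Hom A B)]
    [CStarCategory O Hom]

/-- If two `*`-functors `ω, ρ` on a small commutative C*-category agree on
`C_{AA}`, then `|ω(x)| = |ρ(x)|` on `C_{AB}`; in particular their kernels on `C_{AB}` coincide,
and if `ω` is not identically zero on `C_{AB}` then `ρ = u·ω` on `C_{AB}` for some unimodular
`u ∈ ℂ`. -/
theorem StarFunctor.abs_eq_on_hom_of_eq_on_diagonal
    (hcomm : CStarCategory.IsCommutative O Hom) (A B : O)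
    (ω ρ : StarFunctor O Hom)
    (h : ∀ a : Hom A A, ω.toFun a = ρ.toFun a) :
    (∀ x : Hom A B, ‖ω.toFun x‖ = ‖ρ.toFun x‖) ∧
    ({x : Hom A B | ω.toFun x = 0} = {x : Hom A B | ρ.toFun x = 0}) ∧
    ((∃ x : Hom A B, ω.toFun x ≠ 0) →
      ∃ u : ℂ, ‖u‖ = 1 ∧ ∀ x : Hom A B, ρ.toFun x = u * ω.toFun x) := by

  have key : ∀ x y : Hom A B,
      ω.toFun x * starRingEnd ℂ (ω.toFun y) = ρ.toFun x * starRingEnd ℂ (ρ.toFun y) := by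
    intro x y
    have := h (CStarCategory.comp x (CStarCategory.star y))
    simpa [ω.map_comp, ρ.map_comp, ω.map_star, ρ.map_star] using this
  have habs : ∀ x : Hom A B, ‖ω.toFun x‖ = ‖ρ.toFun x‖ := by
    intro x
    have := key x x
    rw [Complex.mul_conj, Complex.mul_conj] at this
    have h2 : Complex.normSq (ω.toFun x) = Complex.normSq (ρ.toFun x) := by
      exact_mod_cast this
    rw [Complex.norm_def, Complex.norm_def, h2]
  refine ⟨habs, ?_, ?_⟩
  · ext x
    simp only [Set.mem_setOf_eq]
    constructor <;> intro hx
    · have := habs x; rw [hx] at this; simpa using this.symm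
    · have := habs x; rw [hx] at this; simpa using this
  · rintro ⟨x₀, hx₀⟩
    refine ⟨ρ.toFun x₀ / ω.toFun x₀, ?_, ?_⟩
    · rw [norm_div, ← habs x₀, div_self]
      simpa using hx₀
    · intro x
      have hn : ρ.toFun x₀ * starRingEnd ℂ (ρ.toFun x₀)
          = ω.toFun x₀ * starRingEnd ℂ (ω.toFun x₀) := (key x₀ x₀).symm
      have hc : starRingEnd ℂ (ω.toFun x₀) ≠ 0 := by simpa using hx₀
      have hmain : ρ.toFun x * ω.toFun x₀ = ρ.toFun x₀ * ω.toFun x := by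
        have h1 : ρ.toFun x * ω.toFun x₀ * starRingEnd ℂ (ω.toFun x₀)
            = ρ.toFun x₀ * ω.toFun x * starRingEnd ℂ (ω.toFun x₀) := by
          have hk := key x x₀
          calc ρ.toFun x * ω.toFun x₀ * starRingEnd ℂ (ω.toFun x₀)
              = ρ.toFun x * (ω.toFun x₀ * starRingEnd ℂ (ω.toFun x₀)) := by ring
            _ = ρ.toFun x * (ρ.toFun x₀ * starRingEnd ℂ (ρ.toFun x₀)) := by rw [hn]
            _ = ρ.toFun x₀ * (ρ.toFun x * starRingEnd ℂ (ρ.toFun x₀)) := by ring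
            _ = ρ.toFun x₀ * (ω.toFun x * starRingEnd ℂ (ω.toFun x₀)) := by rw [← hk]
            _ = ρ.toFun x₀ * ω.toFun x * starRingEnd ℂ (ω.toFun x₀) := by ring
        exact mul_right_cancel₀ hc h1
      rw [div_mul_eq_mul_div, eq_div_iff hx₀]
      linear_combination hmain
end

section
/- Let C be a small commutative C*-category, let A, B, D be objects of C, and let ω, ρ ∈ [C;ℂ] satisfy ω(b) = ρ(b) for all b ∈ C_{BB}, with ω not identically zero on C_{AB} and ρ not identically zero on C_{BD}. Then there exist σ ∈ [C;ℂ] and unimodular complex numbers u, v such that σ(x) = u·ω(x) for all x ∈ C_{AB} and σ(y) = v·ρ(y) for all y ∈ C_{BD}, and moreover σ is not identically zero on C_{AD}. Furthermore, for any two such σ, σ′ there exists a unimodular complex number w with σ′(z) = w·σ(z) for all z ∈ C_{AD}. -/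
universe u v

variable {O : Type u} {Hom : O → O → Type v}
    [∀ A B, NormedAddCommGroup (Hom A B)] [∀ A B, NormedSpace ℂ (Hom A B)]
    [CStarCategory O Hom]

/-- `σ` interpolates `ω` on `C_{AB}` and `ρ` on `C_{BD}` up to unimodular phases. -/
def StarFunctor.Interpolates (O : Type u) (Hom : O → O → Type v)
    [∀ A B, NormedAddCommGroup (Hom A B)] [∀ A B, NormedSpace ℂ (Hom A B)]
    [CStarCategory O Hom] (A B D : O) (ω ρ σ : StarFunctor O Hom) : Prop :=
  ∃ u v : ℂ, ‖u‖ = 1 ∧ ‖v‖ = 1 ∧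
    (∀ x : Hom A B, σ.toFun x = u * ω.toFun x) ∧
    (∀ y : Hom B D, σ.toFun y = v * ρ.toFun y)

/-- For `*`-functors `ω, ρ` on a small commutative C*-category agreeing on
`C_{BB}`, with `ω` nonvanishing on `C_{AB}` and `ρ` nonvanishing on `C_{BD}`, there exists a
`*`-functor `σ` agreeing with `ω` on `C_{AB}` and with `ρ` on `C_{BD}` up to unimodular phases
and not identically zero on `C_{AD}`; moreover any two such `σ, σ′` differ on `C_{AD}` by a
unimodular phase. -/
theorem StarFunctor.exists_interpolating_starFunctor
    (hcomm : CStarCategory.IsCommutative O Hom) (A B D : O)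
    (ω ρ : StarFunctor O Hom)
    (h : ∀ b : Hom B B, ω.toFun b = ρ.toFun b)
    (hω : ∃ x : Hom A B, ω.toFun x ≠ 0) (hρ : ∃ y : Hom B D, ρ.toFun y ≠ 0) :
    (∃ σ : StarFunctor O Hom, StarFunctor.Interpolates O Hom A B D ω ρ σ ∧
      ∃ z : Hom A D, σ.toFun z ≠ 0) ∧
    (∀ σ σ' : StarFunctor O Hom, StarFunctor.Interpolates O Hom A B D ω ρ σ →
      StarFunctor.Interpolates O Hom A B D ω ρ σ' →
      ∃ w : ℂ, ‖w‖ = 1 ∧ ∀ z : Hom A D, σ'.toFun z = w * σ.toFun z) := by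
  obtain ⟨x₀, hx₀⟩ := hω
  obtain ⟨y₀, hy₀⟩ := hρ
  -- key identity on C_{BD}
  have key : ∀ y y' : Hom B D, ω.toFun y * starRingEnd ℂ (ω.toFun y')
      = ρ.toFun y * starRingEnd ℂ (ρ.toFun y') := by
    intro y y'
    have := h (CStarCategory.comp y (CStarCategory.star y'))
    rwa [ω.map_comp, ρ.map_comp, ω.map_star, ρ.map_star] at this
  have hy₀ω : ω.toFun y₀ ≠ 0 := by
    intro h0
    have := key y₀ y₀
    rw [h0] at this
    simp only [zero_mul] at this
    exact hy₀ (by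
      have := this.symm
      rw [Complex.mul_conj] at this
      have h2 : Complex.normSq (ρ.toFun y₀) = 0 := by exact_mod_cast this
      exact Complex.normSq_eq_zero.mp h2)
  have habs : ‖ω.toFun y₀‖ = ‖ρ.toFun y₀‖ := by
    have := key y₀ y₀
    rw [Complex.mul_conj, Complex.mul_conj] at this
    have h2 : Complex.normSq (ω.toFun y₀) = Complex.normSq (ρ.toFun y₀) := by
      exact_mod_cast this
    rw [Complex.normSq_eq_norm_sq, Complex.normSq_eq_norm_sq] at h2
    nlinarith [norm_nonneg (ω.toFun y₀), norm_nonneg (ρ.toFun y₀)]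
  set v : ℂ := ω.toFun y₀ / ρ.toFun y₀ with hv_def
  have hvabs : ‖v‖ = 1 := by
    rw [hv_def, norm_div, habs, div_self]
    simpa using hy₀
  have hBD : ∀ y : Hom B D, ω.toFun y = v * ρ.toFun y := by
    intro y
    have hk := key y y₀
    have hk0 := key y₀ y₀
    have aux : ω.toFun y * ρ.toFun y₀ = ω.toFun y₀ * ρ.toFun y := by
      have hb0 : starRingEnd ℂ (ρ.toFun y₀) ≠ 0 := by simpa using hy₀
      apply mul_right_cancel₀ hb0
      linear_combination ω.toFun y₀ * hk - ω.toFun y * hk0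
    rw [hv_def, div_mul_eq_mul_div, eq_div_iff hy₀]
    linear_combination aux
  constructor
  · refine ⟨ω, ⟨1, v, by simp, hvabs, fun x => by simp, hBD⟩,
      CStarCategory.comp x₀ y₀, ?_⟩
    rw [ω.map_comp]
    exact mul_ne_zero hx₀ hy₀ω
  · rintro σ σ' ⟨u, v₁, hu, hv₁, hσAB, hσBD⟩ ⟨u', v₁', hu', hv₁', hσ'AB, hσ'BD⟩
    -- for an interpolating σ, a formula for σ on C_{AD}
    have formula : ∀ (τ : StarFunctor O Hom) (a b : ℂ),
        (∀ x : Hom A B, τ.toFun x = a * ω.toFun x) →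
        (∀ y : Hom B D, τ.toFun y = b * ρ.toFun y) →
        ∀ z : Hom A D, starRingEnd ℂ a * starRingEnd ℂ (ω.toFun x₀) * τ.toFun z
          = b * ρ.toFun (CStarCategory.comp (CStarCategory.star x₀) z) := by
      intro τ a b hA hB z
      have h1 : τ.toFun (CStarCategory.comp (CStarCategory.star x₀) z)
          = starRingEnd ℂ a * starRingEnd ℂ (ω.toFun x₀) * τ.toFun z := by
        rw [τ.map_comp, τ.map_star, hA x₀, map_mul]
      have h2 := hB (CStarCategory.comp (CStarCategory.star x₀) z)
      rw [h1] at h2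
      exact h2
    have F := formula σ u v₁ hσAB hσBD
    have F' := formula σ' u' v₁' hσ'AB hσ'BD
    refine ⟨u' * v₁' * starRingEnd ℂ (u * v₁), ?_, ?_⟩
    · simp [map_mul, Complex.norm_conj, hu, hv₁, hu', hv₁']
    · intro z
      have hc : starRingEnd ℂ (ω.toFun x₀) ≠ 0 := by simpa using hx₀
      have huu : u * starRingEnd ℂ u = 1 := by
        rw [Complex.mul_conj]
        norm_cast
        rw [Complex.normSq_eq_norm_sq, hu]; norm_num
      have huu' : u' * starRingEnd ℂ u' = 1 := by
        rw [Complex.mul_conj]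
        norm_cast
        rw [Complex.normSq_eq_norm_sq, hu']; norm_num
      have hvv : v₁ * starRingEnd ℂ v₁ = 1 := by
        rw [Complex.mul_conj]
        norm_cast
        rw [Complex.normSq_eq_norm_sq, hv₁]; norm_num
      have e1 := F z
      have e2 := F' z
      -- σ' z * conj(ω x₀) = u'v'conj(u v₁) σ z * conj(ω x₀)
      have : starRingEnd ℂ (ω.toFun x₀) * σ'.toFun z
          = starRingEnd ℂ (ω.toFun x₀) * (u' * v₁' * starRingEnd ℂ (u * v₁) * σ.toFun z) := by
        rw [map_mul]
        linear_combination u' * e2 - σ'.toFun z * starRingEnd ℂ (ω.toFun x₀) * huu'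
          - u' * v₁' * starRingEnd ℂ v₁ * e1
          - u' * v₁' * ρ.toFun (CStarCategory.comp (CStarCategory.star x₀) z) * hvv
      exact mul_left_cancel₀ hc this
end
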